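/- Let X be a Banach space, X₁, X₂ closed subspaces, and Q₁ : X → X/X₁, Q₂ : X → X/X₂ the quotient maps. If the restriction of Q₁ to X₂ is a λ-surjection onto its image Q₁(X₂) (i.e., the image of the open ball of radius λ in X₂ contains the open unit ball of Q₁(X₂)), then the restriction of Q₂ to X₁ is a (λ+1)-surjection onto its image Q₂(X₁). -/
import Mathlib

/-- If the restriction of the quotient map `Q₁ : X → X/X₁` to `X₂` is a `λ`-surjection onto its
image `Q₁(X₂)` (the image of the open ball of radius `λ` of `X₂` contains the open unit ball of
`Q₁(X₂)`), then the restriction of `Q₂ : X → X/X₂` to `X₁` is a `(λ+1)`-surjection onto its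
image `Q₂(X₁)`. -/
theorem quotient_lambda_surjection
    {𝕜 X : Type*} [RCLike 𝕜] [NormedAddCommGroup X] [NormedSpace 𝕜 X] [CompleteSpace X]
    (X₁ X₂ : Submodule 𝕜 X) (h₁ : IsClosed (X₁ : Set X)) (h₂ : IsClosed (X₂ : Set X))
    (lam : ℝ) (hlam : 0 < lam)
    (hsurj : ∀ y : X ⧸ X₁, y ∈ X₂.map X₁.mkQ → ‖y‖ < 1 →
      ∃ x ∈ X₂, ‖x‖ < lam ∧ X₁.mkQ x = y) :
    ∀ y : X ⧸ X₂, y ∈ X₁.map X₂.mkQ → ‖y‖ < 1 →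
      ∃ x ∈ X₁, ‖x‖ < lam + 1 ∧ X₂.mkQ x = y := by
  rintro y hy hynorm
  obtain ⟨x₁, hx₁, rfl⟩ := hy
  -- choose a representative m of the coset with ‖m‖ < 1
  have hε : (0 : ℝ) < 1 - ‖X₂.mkQ x₁‖ := by linarith
  obtain ⟨m, hm, hmnorm⟩ := Submodule.Quotient.norm_mk_lt (X₂.mkQ x₁) hε
  have hmnorm' : ‖m‖ < 1 := by linarith
  -- z := x₁ - m ∈ X₂
  have hz : x₁ - m ∈ X₂ := by
    rw [← Submodule.Quotient.mk_eq_zero]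
    simp only [Submodule.Quotient.mk_sub]
    change X₂.mkQ x₁ - X₂.mkQ m = 0
    rw [show X₂.mkQ m = Submodule.Quotient.mk m from rfl, hm, sub_self]
  set z := x₁ - m with hzdef
  -- Q₁ z lies in Q₁(X₂) and has norm < 1
  have hmem : X₁.mkQ z ∈ X₂.map X₁.mkQ := ⟨z, hz, rfl⟩
  have hnorm : ‖X₁.mkQ z‖ < 1 := by
    have heq : X₁.mkQ z = X₁.mkQ (-m) := by
      refine (Submodule.Quotient.eq X₁).2 ?_
      have : z - -m = x₁ := by rw [hzdef]; abel
      rw [this]; exact hx₁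
    rw [heq]
    calc ‖X₁.mkQ (-m)‖ ≤ ‖-m‖ := Submodule.Quotient.norm_mk_le _ _
      _ = ‖m‖ := norm_neg m
      _ < 1 := hmnorm'
  obtain ⟨w, hw, hwnorm, hQw⟩ := hsurj _ hmem hnorm
  refine ⟨x₁ - z + w, ?_, ?_, ?_⟩
  · have hzw : z - w ∈ X₁ := by
      rw [← Submodule.Quotient.mk_eq_zero]
      have : X₁.mkQ (z - w) = 0 := by rw [map_sub, hQw, sub_self]
      simpa using this
    have : x₁ - (z - w) ∈ X₁ := X₁.sub_mem hx₁ hzw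
    simpa [sub_add] using this
  · calc ‖x₁ - z + w‖ ≤ ‖x₁ - z‖ + ‖w‖ := norm_add_le _ _
      _ < 1 + lam := by
          have : ‖x₁ - z‖ = ‖m‖ := by rw [hzdef]; simp
          rw [this]; linarith
      _ = lam + 1 := by ring
  · have h1 : X₂.mkQ z = 0 := (Submodule.Quotient.mk_eq_zero X₂).2 hz
    have h2 : X₂.mkQ w = 0 := (Submodule.Quotient.mk_eq_zero X₂).2 hw
    rw [map_add, map_sub, h1, h2]
    simp
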